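/- Let f₁, …, fₙ ∈ K^d span K^d as a K-vector space and let u₁, …, uₙ ∈ ℤ. Then there exist a d-element subset τ ⊆ {1,…,n} such that (f_j)_{j∈τ} is a K-basis of K^d, and integers (a_j)_{j∈τ}, such that the R-submodule of K^d generated by z^{-u₁}f₁, …, z^{-uₙ}fₙ equals the R-submodule generated by the d elements z^{-a_j}f_j with j ∈ τ. (Every lattice in a membrane lies in one of the apartments spanned by d linearly independent generating vectors.) -/

import Mathlib

/- Every lattice in a membrane lies in an apartment: if f₁,…,fₙ span K^d and u ∈ ℤⁿ, then
   the R-module generated by the z^{-uᵢ}fᵢ is generated by d of the fⱼ (suitably rescaled)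
   which form a K-basis of K^d. -/

noncomputable section
set_option synthInstance.maxHeartbeats 1000000
set_option maxHeartbeats 1000000

abbrev K := LaurentSeries ℂ

abbrev Rring : Subring K := (HahnSeries.ofPowerSeries ℤ ℂ).range

def z : K := HahnSeries.single 1 1

lemma mem_Rring_iff {x : K} : x ∈ Rring ↔ x = 0 ∨ 0 ≤ x.order := by
  constructor
  · rintro ⟨F, rfl⟩
    by_cases h : (HahnSeries.ofPowerSeries ℤ ℂ) F = 0
    · exact Or.inl h
    · refine Or.inr ?_
      by_contra hneg
      push_neg at hneg
      have := HahnSeries.coeff_order_eq_zero.not.2 h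
      rw [PowerSeries.coeff_coe, if_pos hneg] at this
      exact this rfl
  · rintro (rfl | h)
    · exact Subring.zero_mem _
    · refine ⟨PowerSeries.X ^ x.order.toNat * x.powerSeriesPart, ?_⟩
      rw [map_mul, HahnSeries.ofPowerSeries_X_pow, Int.toNat_of_nonneg h,
        LaurentSeries.single_order_mul_powerSeriesPart]

lemma div_mem_Rring {b c : K} (hb : b ≠ 0) (h : b.order ≤ c.order) : b⁻¹ * c ∈ Rring := by
  by_cases hc : c = 0
  · simp [hc, Subring.zero_mem]
  · have hbinv : b⁻¹ ≠ 0 := inv_ne_zero hb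
    have hmul : (b * b⁻¹).order = b.order + (b⁻¹).order := HahnSeries.order_mul hb hbinv
    rw [mul_inv_cancel₀ hb, HahnSeries.order_one] at hmul
    have horder : (b⁻¹ * c).order = (b⁻¹).order + c.order := HahnSeries.order_mul hbinv hc
    refine mem_Rring_iff.mpr (Or.inr ?_)
    rw [horder]; omega

lemma smul_mem_Rspan {d : ℕ} {M : Submodule Rring (Fin d → K)} {r : K} (hr : r ∈ Rring)
    {x : Fin d → K} (hx : x ∈ M) : r • x ∈ M :=
  M.smul_mem (⟨r, hr⟩ : Rring) hx

lemma z_ne_zero : z ≠ 0 := HahnSeries.single_ne_zero one_ne_zero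

lemma base_case {d n : ℕ} (f : Fin n → (Fin d → K)) (u : Fin n → ℤ) (s : Finset (Fin n))
    (hle : s.card ≤ d) (hspan : Submodule.span K (f '' s) = ⊤) :
    ∃ τ : Finset (Fin n), τ.card = d ∧
      LinearIndependent K (fun j : τ => f j) ∧
      Submodule.span K (f '' τ) = ⊤ ∧
      ∃ a : Fin n → ℤ,
        Submodule.span Rring ((fun i => z ^ (-(u i)) • f i) '' s) =
          Submodule.span Rring ((fun j => z ^ (-(a j)) • f j) '' τ) := by
  classical
  have hrange : Set.range (fun j : s => f j) = f '' s := by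
    ext x; simp
  have hge : d ≤ s.card := by
    by_contra hlt
    push_neg at hlt
    have h1 : Module.finrank K (Fin d → K) ≤ (s.image f).card := by
      have h0 := finrank_span_finset_le_card (R := K) (s.image f)
      rwa [Set.finrank, Finset.coe_image, hspan, finrank_top] at h0
    rw [Module.finrank_fin_fun] at h1
    have := Finset.card_image_le (s := s) (f := f)
    omega
  have hcard : s.card = d := le_antisymm hle hge
  have hcard' : Fintype.card s = Module.finrank K (Fin d → K) := by
    rw [Fintype.card_coe, hcard, Module.finrank_fin_fun]
  have hli : LinearIndependent K (fun j : s => f j) :=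
    linearIndependent_of_top_le_span_of_card_eq_finrank (by rw [hrange, hspan]) hcard'
  exact ⟨s, hcard, hli, hspan, u, rfl⟩

lemma aux_membrane {d n : ℕ} (f : Fin n → (Fin d → K)) (u : Fin n → ℤ) :
    ∀ (N : ℕ) (s : Finset (Fin n)), s.card ≤ N → Submodule.span K (f '' s) = ⊤ →
    ∃ τ : Finset (Fin n), τ.card = d ∧
      LinearIndependent K (fun j : τ => f j) ∧
      Submodule.span K (f '' τ) = ⊤ ∧
      ∃ a : Fin n → ℤ,
        Submodule.span Rring ((fun i => z ^ (-(u i)) • f i) '' s) =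
          Submodule.span Rring ((fun j => z ^ (-(a j)) • f j) '' τ) := by
  intro N
  induction N with
  | zero =>
    intro s hcard hspan
    exact base_case f u s (le_trans hcard (Nat.zero_le d)) hspan
  | succ N ih =>
    intro s hcard hspan
    classical
    by_cases hle : s.card ≤ d
    · exact base_case f u s hle hspan
    push_neg at hle
    set g : Fin n → (Fin d → K) := fun i => z ^ (-(u i)) • f i with hg
    -- the family g restricted to s is linearly dependent
    have hdep : ¬ LinearIndependent K (fun j : s => g j) := by
      intro h
      have := h.fintype_card_le_finrank
      rw [Fintype.card_coe, Module.finrank_fin_fun] at this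
      omega
    obtain ⟨c, hsum, j₀, hj₀⟩ := Fintype.not_linearIndependent_iff.mp hdep
    set T : Finset s := Finset.univ.filter (fun j => c j ≠ 0) with hT
    have hTne : T.Nonempty := ⟨j₀, Finset.mem_filter.mpr ⟨Finset.mem_univ _, hj₀⟩⟩
    obtain ⟨i, hiT, hmin⟩ := T.exists_min_image (fun j => (c j).order) hTne
    have hci : c i ≠ 0 := (Finset.mem_filter.mp hiT).2
    -- express g i as combination of the others
    have hsum' : c i • g ↑i + ∑ j ∈ Finset.univ.erase i, c j • g ↑j = 0 := by
      have h0 := hsum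
      rw [← Finset.add_sum_erase Finset.univ (fun j => c j • g ↑j) (Finset.mem_univ i)] at h0
      exact h0
    have hgi : g ↑i = ∑ j ∈ Finset.univ.erase i, (-((c i)⁻¹ * c j)) • g ↑j := by
      have h1 : c i • g ↑i = ∑ j ∈ Finset.univ.erase i, (-(c j)) • g ↑j := by
        have h2 := eq_neg_of_add_eq_zero_left hsum'
        rw [h2]
        rw [← Finset.sum_neg_distrib]
        exact Finset.sum_congr rfl fun j _ => by funext t; simp only [Pi.smul_apply, Pi.neg_apply, smul_eq_mul]; ring
      calc g ↑i = (c i)⁻¹ • (c i • g ↑i) := (inv_smul_smul₀ hci _).symm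
        _ = ∑ j ∈ Finset.univ.erase i, (-((c i)⁻¹ * c j)) • g ↑j := by
            rw [h1, Finset.smul_sum]
            refine Finset.sum_congr rfl fun j _ => ?_
            funext t
            simp only [Pi.smul_apply, Pi.neg_apply, smul_eq_mul]
            ring
    -- the coefficients lie in Rring
    have hcoef : ∀ j : s, j ≠ i → (-((c i)⁻¹ * c j)) ∈ Rring := by
      intro j hji
      apply Subring.neg_mem
      by_cases hcj : c j = 0
      · rw [hcj, mul_zero]; exact Subring.zero_mem _
      · exact div_mem_Rring hci (hmin j (Finset.mem_filter.mpr ⟨Finset.mem_univ j, hcj⟩))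
    -- membership of images in sets over the erased finset
    have himg : ∀ j : s, j ≠ i → ∀ (h : Fin n → Fin d → K),
        h ↑j ∈ h '' ↑(s.erase ↑i) := by
      intro j hji h
      exact ⟨↑j, Finset.mem_coe.mpr (Finset.mem_erase.mpr
        ⟨fun hc => hji (Subtype.ext hc), j.2⟩), rfl⟩
    -- g i lies in the R-span over the erased set
    have hmemR : g ↑i ∈ Submodule.span Rring (g '' ↑(s.erase ↑i)) := by
      rw [hgi]
      refine Submodule.sum_mem _ fun j hj => ?_
      have hji : j ≠ i := (Finset.mem_erase.mp hj).1
      exact smul_mem_Rspan (hcoef j hji) (Submodule.subset_span (himg j hji g))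
    -- g i lies in the K-span of f over the erased set
    have hmemK : g ↑i ∈ Submodule.span K (f '' ↑(s.erase ↑i)) := by
      rw [hgi]
      refine Submodule.sum_mem _ fun j hj => ?_
      have hji : j ≠ i := (Finset.mem_erase.mp hj).1
      refine Submodule.smul_mem _ _ ?_
      simp only [hg]
      exact Submodule.smul_mem _ _ (Submodule.subset_span (himg j hji f))
    have hfi : f ↑i ∈ Submodule.span K (f '' ↑(s.erase ↑i)) := by
      have : f ↑i = z ^ (u ↑i) • g ↑i := by
        funext t
        simp only [hg, Pi.smul_apply, smul_eq_mul]
        rw [← mul_assoc, ← zpow_add₀ z_ne_zero, add_neg_cancel, zpow_zero, one_mul]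
      rw [this]
      exact Submodule.smul_mem _ _ hmemK
    -- splitting off i
    have hins : ∀ (h : Fin n → Fin d → K), h '' ↑s = insert (h ↑i) (h '' ↑(s.erase ↑i)) := by
      intro h
      conv_lhs => rw [← Finset.insert_erase i.2]
      rw [Finset.coe_insert, Set.image_insert_eq]
    -- K-span over erased set is still everything
    have hspan' : Submodule.span K (f '' ↑(s.erase ↑i)) = ⊤ := by
      rw [← hspan, hins f, Submodule.span_insert_eq_span hfi]
    -- R-span equality
    have hRspan : Submodule.span Rring (g '' ↑s) = Submodule.span Rring (g '' ↑(s.erase ↑i)) := by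
      rw [hins g, Submodule.span_insert_eq_span hmemR]
    -- recurse
    have hcard' : (s.erase ↑i).card ≤ N := by
      have := Finset.card_erase_of_mem i.2
      omega
    obtain ⟨τ, hτcard, hτli, hτspan, a, ha⟩ := ih (s.erase ↑i) hcard' hspan'
    exact ⟨τ, hτcard, hτli, hτspan, a, by rw [hRspan, ha]⟩

theorem membrane_covered_by_apartments {d n : ℕ} (f : Fin n → (Fin d → K))
    (hspan : Submodule.span K (Set.range f) = ⊤) (u : Fin n → ℤ) :
    ∃ τ : Finset (Fin n), τ.card = d ∧
      LinearIndependent K (fun j : τ => f j) ∧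
      Submodule.span K (f '' τ) = ⊤ ∧
      ∃ a : Fin n → ℤ,
        Submodule.span Rring (Set.range fun i => z ^ (-(u i)) • f i) =
          Submodule.span Rring ((fun j => z ^ (-(a j)) • f j) '' τ) := by
  have h1 : (Set.range fun i => z ^ (-(u i)) • f i) =
      (fun i => z ^ (-(u i)) • f i) '' (Finset.univ : Finset (Fin n)) := by
    simp
  have h2 : Submodule.span K (f '' (Finset.univ : Finset (Fin n))) = ⊤ := by
    simpa using hspan
  rw [h1]
  exact aux_membrane f u Finset.univ.card Finset.univ le_rfl h2
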